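/- Totally ramified points. Let K be an algebraically closed field and let F : P¹(K) → P¹(K) be a rational map of degree d > 1. Then exactly one of the following holds: either F is bijective and F is totally ramified at every point of P¹(K), or F is not bijective and there are at most two points of P¹(K) at which F is totally ramified. -/

import Mathlib

/-- The lift to `K²` of the rational map `[x:y] ↦ [P(x,y) : Q(x,y)]` of `P¹(K)`. -/
noncomputable def projLift {K : Type*} [Field K] (P Q : MvPolynomial (Fin 2) K)
    (v : Fin 2 → K) : Fin 2 → K :=
  ![MvPolynomial.eval v P, MvPolynomial.eval v Q]

/-- The rational map `F : P¹(K) → P¹(K)`, `F([x:y]) = [P(x,y) : Q(x,y)]`, induced by a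
pair of homogeneous polynomials with no common zero away from the origin. -/
noncomputable def projMap {K : Type*} [Field K] (P Q : MvPolynomial (Fin 2) K)
    (hPQ : ∀ v : Fin 2 → K, v ≠ 0 → projLift P Q v ≠ 0) :
    Projectivization K (Fin 2 → K) → Projectivization K (Fin 2 → K) :=
  fun ξ => Projectivization.mk K (projLift P Q ξ.rep) (hPQ ξ.rep ξ.rep_nonzero)


open MvPolynomial

namespace TRPaux
variable {K : Type*} [Field K]

def cr (a b : Fin 2 → K) : K := a 0 * b 1 - a 1 * b 0


lemma hom_eval_smul {R : MvPolynomial (Fin 2) K} {n : ℕ} (hR : R.IsHomogeneous n)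
    (c : K) (v : Fin 2 → K) : eval (c • v) R = c ^ n * eval v R := by
  rw [eval_eq', eval_eq', Finset.mul_sum]
  apply Finset.sum_congr rfl
  intro m hm
  have hdeg : ∑ i, m i = n := by
    have h1 : m.degree = n := by
      by_contra h
      exact mem_support_iff.mp hm (hR.coeff_eq_zero h)
    rw [← h1, Finsupp.degree]
    exact (Finset.sum_subset (Finset.subset_univ _)
      (fun i _ hi => Finsupp.notMem_support_iff.mp hi)).symm
  have : ∏ i, (c • v) i ^ m i = c ^ n * ∏ i, v i ^ m i := by
    simp only [Pi.smul_apply, smul_eq_mul, mul_pow]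
    rw [Finset.prod_mul_distrib, Finset.prod_pow_eq_pow_sum, hdeg]
  rw [this]; ring

lemma eval_aeval (R : MvPolynomial (Fin 2) K) (w : Fin 2 → Polynomial K) (t : K) :
    Polynomial.eval t (MvPolynomial.aeval w R) =
      MvPolynomial.eval (fun i => Polynomial.eval t (w i)) R := by
  induction R using MvPolynomial.induction_on with
  | C a => simp [algebraMap_eq]
  | add p q hp hq => simp [hp, hq]
  | mul_X p i hp => simp [hp]

lemma exists_const [IsAlgClosed K] (h : Polynomial K) (H : ∀ t, h.eval t ≠ 0) :
    ∃ c : K, c ≠ 0 ∧ ∀ t, h.eval t = c := by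
  by_cases hdeg : h.degree = 0
  · refine ⟨h.coeff 0, ?_, fun t => ?_⟩
    · have := H 0
      rwa [← Polynomial.coeff_zero_eq_eval_zero] at this
    · conv_lhs => rw [Polynomial.eq_C_of_degree_le_zero hdeg.le]
      simp
  · obtain ⟨x, hx⟩ := IsAlgClosed.exists_root h hdeg
    exact absurd hx (H x)


lemma cr_smul_add (v a b : Fin 2 → K) (s t : K) :
    cr v (s • a + t • b) = s * cr v a + t * cr v b := by
  simp only [cr, Pi.add_apply, Pi.smul_apply, smul_eq_mul]; ring

/-- Two nonzero vectors in `K²` with vanishing cross product are proportional. -/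
lemma prop_of_cr_eq_zero {a b : Fin 2 → K} (ha : a ≠ 0) (hb : b ≠ 0)
    (h : cr a b = 0) : ∃ c : K, c ≠ 0 ∧ b = c • a := by
  have ha' : a 0 ≠ 0 ∨ a 1 ≠ 0 := by
    by_contra hc
    push_neg at hc
    exact ha (funext fun i => by fin_cases i <;> simp [hc.1, hc.2])
  unfold cr at h
  rcases ha' with h0 | h1
  · refine ⟨b 0 / a 0, ?_, funext fun i => ?_⟩
    · intro hc
      have hb0 : b 0 = 0 := by
        field_simp at hc; simpa using hc
      have hb1 : b 1 = 0 := by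
        have : a 0 * b 1 = 0 := by rw [← h]; ring_nf; rw [hb0]; ring
        rcases mul_eq_zero.mp this with h' | h'
        · exact absurd h' h0
        · exact h'
      exact hb (funext fun i => by fin_cases i <;> simp [hb0, hb1])
    · fin_cases i <;> simp [Pi.smul_apply, smul_eq_mul]
      · field_simp
      · field_simp; linear_combination h
  · refine ⟨b 1 / a 1, ?_, funext fun i => ?_⟩
    · intro hc
      have hb1 : b 1 = 0 := by field_simp at hc; simpa using hc
      have hb0 : b 0 = 0 := by
        have : a 1 * b 0 = 0 := by rw [← sub_eq_zero] at h ⊢; linear_combination a 1 * b 1 - a 1 * b 1 - h + (a 0 * hb1)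
        rcases mul_eq_zero.mp this with h' | h'
        · exact absurd h' h1
        · exact h'
      exact hb (funext fun i => by fin_cases i <;> simp [hb0, hb1])
    · fin_cases i <;> simp [Pi.smul_apply, smul_eq_mul]
      · field_simp; linear_combination -h
      · field_simp

end TRPaux

namespace TRPaux
variable {K : Type*} [Field K]

/-- Key lemma: a binary form of degree `d ≥ 1` vanishing at `v₀` and whose nontrivial
zeros all lie on the line `K∙v₀` is, as a function, `c * cr v₀ v ^ d`. -/
lemma key [IsAlgClosed K] {d : ℕ} (hd : d ≠ 0) {R : MvPolynomial (Fin 2) K}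
    (hR : R.IsHomogeneous d) {v₀ : Fin 2 → K} (hv₀ : v₀ ≠ 0)
    (h₀ : eval v₀ R = 0)
    (hline : ∀ v : Fin 2 → K, v ≠ 0 → eval v R = 0 → ∃ c : K, v = c • v₀) :
    ∃ c : K, c ≠ 0 ∧ ∀ v, eval v R = c * (cr v₀ v) ^ d := by
  -- choose u with cr v₀ u ≠ 0
  obtain ⟨u, hk⟩ : ∃ u : Fin 2 → K, cr v₀ u ≠ 0 := by
    have : v₀ 0 ≠ 0 ∨ v₀ 1 ≠ 0 := by
      by_contra hc; push_neg at hc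
      exact hv₀ (funext fun i => by fin_cases i <;> simp [hc.1, hc.2])
    rcases this with h0 | h1
    · exact ⟨![0, 1], by simp [cr, h0]⟩
    · exact ⟨![1, 0], by simp [cr, h1]⟩
  -- the polynomial t ↦ R(t v₀ + u)
  set h : Polynomial K :=
    MvPolynomial.aeval (fun i => Polynomial.C (v₀ i) * Polynomial.X + Polynomial.C (u i)) R
    with hhdef
  have heval : ∀ t : K, h.eval t = eval (t • v₀ + u) R := by
    intro t
    rw [hhdef, eval_aeval]
    have : (fun i => Polynomial.eval t (Polynomial.C (v₀ i) * Polynomial.X + Polynomial.C (u i)))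
        = (t • v₀ + u) := by
      funext i
      simp only [Polynomial.eval_add, Polynomial.eval_mul, Polynomial.eval_C, Polynomial.eval_X,
        Pi.add_apply, Pi.smul_apply, smul_eq_mul]
      ring
    rw [this]
  have hne : ∀ t : K, h.eval t ≠ 0 := by
    intro t hzero
    rw [heval] at hzero
    have hw : (t • v₀ + u : Fin 2 → K) ≠ 0 := by
      intro hw0
      have hu : u = (-t) • v₀ := by
        funext i
        have := congrFun hw0 i
        simp only [Pi.add_apply, Pi.smul_apply, smul_eq_mul, Pi.zero_apply] at this ⊢
        linear_combination this
      apply hk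
      rw [show cr v₀ u = 0 from by
        rw [hu]; simp only [cr, Pi.smul_apply, smul_eq_mul]; ring]
    obtain ⟨c, hc⟩ := hline _ hw hzero
    apply hk
    have hu : u = (c - t) • v₀ := by
      funext i
      have := congrFun hc i
      simp only [Pi.add_apply, Pi.smul_apply, smul_eq_mul] at this ⊢
      linear_combination this
    rw [show cr v₀ u = 0 from by
      rw [hu]; simp only [cr, Pi.smul_apply, smul_eq_mul]; ring]
  obtain ⟨c₀, hc₀, hconst⟩ := exists_const h hne
  refine ⟨c₀ / (cr v₀ u) ^ d, div_ne_zero hc₀ (pow_ne_zero _ hk), fun v => ?_⟩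
  -- decompose (cr v₀ u) • v = (cr v u) • v₀ + (cr v₀ v) • u
  have hdecomp : (cr v₀ u) • v = (cr v u) • v₀ + (cr v₀ v) • u := by
    funext i
    fin_cases i <;>
      · simp only [Pi.add_apply, Pi.smul_apply, smul_eq_mul, cr, Fin.zero_eta, Fin.mk_one,
          Fin.isValue]
        ring
  have hkd : (cr v₀ u) ^ d * eval v R = eval ((cr v u) • v₀ + (cr v₀ v) • u) R := by
    rw [← hdecomp, hom_eval_smul hR]
  by_cases hb : cr v₀ v = 0
  · rw [hb, zero_pow hd, mul_zero]
    have : (cr v₀ u) ^ d * eval v R = 0 := by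
      rw [hkd, hb, zero_smul, add_zero, hom_eval_smul hR, h₀, mul_zero]
    rcases mul_eq_zero.mp this with h' | h'
    · exact absurd h' (pow_ne_zero _ hk)
    · exact h'
  · have hw : (cr v u) • v₀ + (cr v₀ v) • u
        = (cr v₀ v) • (((cr v u) / (cr v₀ v)) • v₀ + u) := by
      funext i
      simp only [Pi.add_apply, Pi.smul_apply, smul_eq_mul]
      rw [mul_add, ← mul_assoc, mul_div_cancel₀ _ hb]
    have : (cr v₀ u) ^ d * eval v R = (cr v₀ v) ^ d * c₀ := by
      rw [hkd, hw, hom_eval_smul hR, ← heval, hconst]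
    field_simp
    linear_combination this
end TRPaux


namespace TRPaux

open MvPolynomial Projectivization

variable {K : Type*} [Field K]

lemma cr_self (a : Fin 2 → K) : cr a a = 0 := by simp [cr, mul_comm]

lemma cr_anti (a b : Fin 2 → K) : cr a b = - cr b a := by simp only [cr]; ring

lemma projLift_smul {d : ℕ} {P Q : MvPolynomial (Fin 2) K}
    (hP : P.IsHomogeneous d) (hQ : Q.IsHomogeneous d) (c : K) (v : Fin 2 → K) :
    projLift P Q (c • v) = c ^ d • projLift P Q v := by
  funext i
  fin_cases i <;>
    simp [projLift, hom_eval_smul hP, hom_eval_smul hQ, Pi.smul_apply, smul_eq_mul]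

lemma projMap_mk {d : ℕ} {P Q : MvPolynomial (Fin 2) K}
    (hP : P.IsHomogeneous d) (hQ : Q.IsHomogeneous d)
    (hPQ : ∀ v : Fin 2 → K, v ≠ 0 → projLift P Q v ≠ 0) (v : Fin 2 → K) (hv : v ≠ 0) :
    projMap P Q hPQ (Projectivization.mk K v hv)
      = Projectivization.mk K (projLift P Q v) (hPQ v hv) := by
  have hwv : Projectivization.mk K (Projectivization.mk K v hv).rep
      (Projectivization.rep_nonzero _) = Projectivization.mk K v hv :=
    Projectivization.mk_rep _
  obtain ⟨a, ha⟩ := (Projectivization.mk_eq_mk_iff K _ _ _ hv).mp hwv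
  show Projectivization.mk K (projLift P Q (Projectivization.mk K v hv).rep) _ = _
  rw [Projectivization.mk_eq_mk_iff']
  refine ⟨(a : K) ^ d, ?_⟩
  rw [← projLift_smul hP hQ]
  congr 1

end TRPaux

namespace TRPaux
open MvPolynomial Projectivization

variable {K : Type*} [Field K]

lemma bij_of_three [IsAlgClosed K] {d : ℕ} (hd : 1 < d) {P Q : MvPolynomial (Fin 2) K}
    (hP : P.IsHomogeneous d) (hQ : Q.IsHomogeneous d)
    (hPQ : ∀ v : Fin 2 → K, v ≠ 0 → projLift P Q v ≠ 0)
    (ξ1 ξ2 ξ3 : Projectivization K (Fin 2 → K))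
    (h12 : ξ1 ≠ ξ2) (h13 : ξ1 ≠ ξ3) (h23 : ξ2 ≠ ξ3)
    (hT1 : (projMap P Q hPQ) ⁻¹' {projMap P Q hPQ ξ1} = {ξ1})
    (hT2 : (projMap P Q hPQ) ⁻¹' {projMap P Q hPQ ξ2} = {ξ2})
    (hT3 : (projMap P Q hPQ) ⁻¹' {projMap P Q hPQ ξ3} = {ξ3}) :
    Function.Bijective (projMap P Q hPQ) := by
  have hd0 : d ≠ 0 := by omega
  have lift0 : ∀ v : Fin 2 → K, (projLift P Q v) 0 = eval v P := fun _ => rfl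
  have lift1 : ∀ v : Fin 2 → K, (projLift P Q v) 1 = eval v Q := fun _ => rfl
  -- eval at 0 is 0
  have heval0 : ∀ {R : MvPolynomial (Fin 2) K}, R.IsHomogeneous d →
      eval (0 : Fin 2 → K) R = 0 := by
    intro R hR
    have := hom_eval_smul hR 0 (0 : Fin 2 → K)
    rwa [zero_smul, zero_pow hd0, zero_mul] at this
  -- main production of the function identity for a totally ramified point
  have main : ∀ ξ : Projectivization K (Fin 2 → K),
      (projMap P Q hPQ) ⁻¹' {projMap P Q hPQ ξ} = {ξ} →
      ∃ c : K, c ≠ 0 ∧ ∀ v, eval ξ.rep P * eval v Q - eval ξ.rep Q * eval v P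
        = c * (cr ξ.rep v) ^ d := by
    intro ξ hT
    set R : MvPolynomial (Fin 2) K := C (eval ξ.rep P) * Q - C (eval ξ.rep Q) * P with hRdef
    have hRhom : R.IsHomogeneous d := by
      simpa using ((isHomogeneous_C (Fin 2) (eval ξ.rep P)).mul hQ).sub
        ((isHomogeneous_C (Fin 2) (eval ξ.rep Q)).mul hP)
    have hReval : ∀ v, eval v R = eval ξ.rep P * eval v Q - eval ξ.rep Q * eval v P := by
      intro v; simp [hRdef]
    have h₀ : eval ξ.rep R = 0 := by rw [hReval]; ring
    have hline : ∀ v : Fin 2 → K, v ≠ 0 → eval v R = 0 → ∃ c : K, v = c • ξ.rep := by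
      intro w hw hzero
      rw [hReval] at hzero
      -- cross product of the two lifted vectors vanishes
      have hcr : cr (projLift P Q ξ.rep) (projLift P Q w) = 0 := by
        simp only [cr, lift0, lift1]; linear_combination hzero
      obtain ⟨c, hc0, hcprop⟩ := prop_of_cr_eq_zero (hPQ _ ξ.rep_nonzero) (hPQ _ hw) hcr
      have hmk : Projectivization.mk K (projLift P Q w) (hPQ w hw)
          = Projectivization.mk K (projLift P Q ξ.rep) (hPQ _ ξ.rep_nonzero) :=
        (Projectivization.mk_eq_mk_iff' K _ _ _ _).mpr ⟨c, hcprop.symm⟩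
      have hF : projMap P Q hPQ (Projectivization.mk K w hw) = projMap P Q hPQ ξ := by
        rw [projMap_mk hP hQ, hmk]
        rfl
      have : Projectivization.mk K w hw ∈ (projMap P Q hPQ) ⁻¹' {projMap P Q hPQ ξ} := hF
      rw [hT] at this
      have hmk2 : Projectivization.mk K w hw = Projectivization.mk K ξ.rep ξ.rep_nonzero := by
        rw [Projectivization.mk_rep]; exact this
      obtain ⟨a, ha⟩ := (Projectivization.mk_eq_mk_iff' K _ _ _ _).mp hmk2
      exact ⟨a, ha.symm⟩
    obtain ⟨c, hc, hr⟩ := key hd0 hRhom ξ.rep_nonzero h₀ hline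
    exact ⟨c, hc, fun v => by rw [← hReval]; exact hr v⟩
  obtain ⟨c1, hc1, hr1⟩ := main ξ1 hT1
  obtain ⟨c2, hc2, hr2⟩ := main ξ2 hT2
  obtain ⟨c3, hc3, hr3⟩ := main ξ3 hT3
  set v1 := ξ1.rep with hv1def
  set v2 := ξ2.rep with hv2def
  set v3 := ξ3.rep with hv3def
  have hv1 : v1 ≠ 0 := ξ1.rep_nonzero
  have hv2 : v2 ≠ 0 := ξ2.rep_nonzero
  have hv3 : v3 ≠ 0 := ξ3.rep_nonzero
  -- pairwise cross products of the three points are nonzero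
  have crne : ∀ (ξ η : Projectivization K (Fin 2 → K)), ξ ≠ η → cr ξ.rep η.rep ≠ 0 := by
    intro ξ η hne h0
    obtain ⟨c, hc0, hcp⟩ := prop_of_cr_eq_zero ξ.rep_nonzero η.rep_nonzero h0
    apply hne
    rw [← Projectivization.mk_rep ξ, ← Projectivization.mk_rep η]
    exact ((Projectivization.mk_eq_mk_iff' K _ _ _ _).mpr ⟨c, hcp.symm⟩).symm
  have k12 : cr v1 v2 ≠ 0 := crne ξ1 ξ2 h12
  have k13 : cr v1 v3 ≠ 0 := crne ξ1 ξ3 h13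
  have k23 : cr v2 v3 ≠ 0 := crne ξ2 ξ3 h23
  have k32 : cr v3 v2 ≠ 0 := by rw [cr_anti]; exact neg_ne_zero.mpr k23
  have k31 : cr v3 v1 ≠ 0 := by rw [cr_anti]; exact neg_ne_zero.mpr k13
  -- abbreviations
  set a1 := eval v1 P with ha1; set b1 := eval v1 Q with hb1
  set a2 := eval v2 P with ha2; set b2 := eval v2 Q with hb2
  set a3 := eval v3 P with ha3; set b3 := eval v3 Q with hb3
  have hD : a1 * b2 - b1 * a2 ≠ 0 := by
    have := hr1 v2
    rw [this]
    exact mul_ne_zero hc1 (pow_ne_zero _ k12)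
  have hE13 : a1 * b3 - b1 * a3 ≠ 0 := by
    have := hr1 v3; rw [this]; exact mul_ne_zero hc1 (pow_ne_zero _ k13)
  have hE32 : a3 * b2 - b3 * a2 ≠ 0 := by
    have := hr3 v2; rw [this]; exact mul_ne_zero hc3 (pow_ne_zero _ k32)
  set D := a1 * b2 - b1 * a2 with hDdef
  set α := (a3 * b2 - b3 * a2) / D with hαdef
  set β := (a1 * b3 - b1 * a3) / D with hβdef
  have hα : α ≠ 0 := div_ne_zero hE32 hD
  have hβ : β ≠ 0 := div_ne_zero hE13 hD
  have hA : a3 = α * a1 + β * a2 := by rw [hαdef, hβdef]; field_simp; ring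
  have hB : b3 = α * b1 + β * b2 := by rw [hαdef, hβdef]; field_simp; ring
  have hstar : ∀ v, c3 * (cr v3 v) ^ d
      = α * (c1 * (cr v1 v) ^ d) + β * (c2 * (cr v2 v) ^ d) := by
    intro v
    have h1 := hr1 v
    have h2 := hr2 v
    have h3 := hr3 v
    linear_combination (eval v Q) * hA - (eval v P) * hB - h3 + α * h1 + β * h2
  -- parametrize the plane by the "dual basis" of (cr v1 ·, cr v2 ·)
  set s : K → K → (Fin 2 → K) :=
    fun x y => (-y / cr v1 v2) • v1 + (x / cr v1 v2) • v2 with hsdef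
  have hs1 : ∀ x y, cr v1 (s x y) = x := by
    intro x y
    rw [hsdef]; rw [cr_smul_add, cr_self]
    field_simp
    ring
  have hs2 : ∀ x y, cr v2 (s x y) = y := by
    intro x y
    rw [hsdef]; rw [cr_smul_add, cr_self, cr_anti v2 v1]
    field_simp
    ring
  obtain ⟨γ, hγdef⟩ : ∃ g : K, g = cr v3 v2 / cr v1 v2 := ⟨_, rfl⟩
  obtain ⟨δ, hδdef⟩ : ∃ g : K, g = -(cr v3 v1) / cr v1 v2 := ⟨_, rfl⟩
  have hγ : γ ≠ 0 := by rw [hγdef]; exact div_ne_zero k32 k12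
  have hδ : δ ≠ 0 := by rw [hδdef]; exact div_ne_zero (neg_ne_zero.mpr k31) k12
  have hs3 : ∀ x y, cr v3 (s x y) = γ * x + δ * y := by
    intro x y
    rw [hsdef, cr_smul_add, hγdef, hδdef]
    field_simp
    ring
  have hγδ : ∀ x y : K, c3 * (γ * x + δ * y) ^ d
      = α * (c1 * x ^ d) + β * (c2 * y ^ d) := by
    intro x y
    have := hstar (s x y)
    rwa [hs1, hs2, hs3] at this
  have hAc : α * c1 = c3 * γ ^ d := by
    have := hγδ 1 0
    rw [mul_zero, add_zero, mul_one, zero_pow hd0] at this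
    linear_combination -this
  have hBc : β * c2 = c3 * δ ^ d := by
    have := hγδ 0 1
    rw [mul_zero, zero_add, mul_one, zero_pow hd0] at this
    linear_combination -this
  -- the d-th power map is additive
  have hadd : ∀ x y : K, (x + y) ^ d = x ^ d + y ^ d := by
    intro x y
    have h := hγδ (x / γ) (y / δ)
    rw [show γ * (x / γ) + δ * (y / δ) = x + y from by
      rw [mul_comm γ (x / γ), div_mul_cancel₀ x hγ, mul_comm δ (y / δ),
        div_mul_cancel₀ y hδ]] at h
    apply mul_left_cancel₀ hc3
    rw [h, div_pow, div_pow,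
      show α * (c1 * (x ^ d / γ ^ d)) = α * c1 * x ^ d / γ ^ d from by ring,
      show β * (c2 * (y ^ d / δ ^ d)) = β * c2 * y ^ d / δ ^ d from by ring,
      hAc, hBc,
      show c3 * γ ^ d * x ^ d / γ ^ d = c3 * x ^ d * (γ ^ d / γ ^ d) from by ring,
      show c3 * δ ^ d * y ^ d / δ ^ d = c3 * y ^ d * (δ ^ d / δ ^ d) from by ring,
      div_self (pow_ne_zero d hγ), div_self (pow_ne_zero d hδ)]
    ring
  have hneg : ∀ x : K, (-x) ^ d = -(x ^ d) := by
    intro x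
    have := hadd x (-x)
    rw [add_neg_cancel, zero_pow hd0] at this
    exact (eq_neg_of_add_eq_zero_right this.symm)
  have hpinj : ∀ x y : K, x ^ d = y ^ d → x = y := by
    intro x y hxy
    have h : (x - y) ^ d = 0 := by
      rw [sub_eq_add_neg, hadd, hneg, hxy]; ring
    exact sub_eq_zero.mp ((pow_eq_zero_iff hd0).mp h)
  have hpsurj : ∀ x : K, ∃ z : K, z ^ d = x :=
    fun x => IsAlgClosed.exists_pow_nat_eq x (by omega)
  -- formulas for P and Q
  set e1 := a2 * c1 / D with he1
  set e2 := -(a1 * c2) / D with he2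
  set f1 := b2 * c1 / D with hf1
  set f2 := -(b1 * c2) / D with hf2
  have hpf : ∀ v, eval v P = e1 * (cr v1 v) ^ d + e2 * (cr v2 v) ^ d := by
    intro v
    have h1 := hr1 v
    have h2 := hr2 v
    rw [he1, he2]
    field_simp
    linear_combination a2 * h1 - a1 * h2
  have hqf : ∀ v, eval v Q = f1 * (cr v1 v) ^ d + f2 * (cr v2 v) ^ d := by
    intro v
    have h1 := hr1 v
    have h2 := hr2 v
    rw [hf1, hf2]
    field_simp
    linear_combination b2 * h1 - b1 * h2
  have hdetM : e1 * f2 - e2 * f1 ≠ 0 := by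
    have : e1 * f2 - e2 * f1 = c1 * c2 / D := by
      rw [he1, he2, hf1, hf2]
      field_simp
      ring
    rw [this]
    exact div_ne_zero (mul_ne_zero hc1 hc2) hD
  -- injectivity of the lift
  have hGinj : ∀ v w : Fin 2 → K, projLift P Q v = projLift P Q w → v = w := by
    intro v w hvw
    have hp : eval v P = eval w P := by rw [← lift0 v, ← lift0 w, hvw]
    have hq : eval v Q = eval w Q := by rw [← lift1 v, ← lift1 w, hvw]
    rw [hpf v, hpf w] at hp
    rw [hqf v, hqf w] at hq
    have hXd : (cr v1 v) ^ d = (cr v1 w) ^ d := by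
      have h0 : (e1 * f2 - e2 * f1) * ((cr v1 v) ^ d - (cr v1 w) ^ d) = 0 := by
        linear_combination f2 * hp - e2 * hq
      rcases mul_eq_zero.mp h0 with h' | h'
      · exact absurd h' hdetM
      · exact sub_eq_zero.mp h'
    have hYd : (cr v2 v) ^ d = (cr v2 w) ^ d := by
      have h0 : (e1 * f2 - e2 * f1) * ((cr v2 v) ^ d - (cr v2 w) ^ d) = 0 := by
        linear_combination e1 * hq - f1 * hp
      rcases mul_eq_zero.mp h0 with h' | h'
      · exact absurd h' hdetM
      · exact sub_eq_zero.mp h'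
    have hX : cr v1 v = cr v1 w := hpinj _ _ hXd
    have hY : cr v2 v = cr v2 w := hpinj _ _ hYd
    simp only [cr] at hX hY
    funext i
    have hk12 : cr v1 v2 ≠ 0 := k12
    simp only [cr] at hk12
    fin_cases i
    · have h0 : (v1 0 * v2 1 - v1 1 * v2 0) * (v 0 - w 0) = 0 := by
        linear_combination (v2 0) * hX - (v1 0) * hY
      rcases mul_eq_zero.mp h0 with h' | h'
      · exact absurd h' hk12
      · exact sub_eq_zero.mp h'
    · have h0 : (v1 0 * v2 1 - v1 1 * v2 0) * (v 1 - w 1) = 0 := by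
        linear_combination (v2 1) * hX - (v1 1) * hY
      rcases mul_eq_zero.mp h0 with h' | h'
      · exact absurd h' hk12
      · exact sub_eq_zero.mp h'
  constructor
  · -- injectivity
    intro ξ η h
    have h' : Projectivization.mk K (projLift P Q ξ.rep) (hPQ _ ξ.rep_nonzero)
        = Projectivization.mk K (projLift P Q η.rep) (hPQ _ η.rep_nonzero) := h
    obtain ⟨a, ha⟩ := (Projectivization.mk_eq_mk_iff' K _ _ _ _).mp h'
    have ha0 : a ≠ 0 := by
      rintro rfl
      apply hPQ ξ.rep ξ.rep_nonzero
      rw [← ha, zero_smul]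
    obtain ⟨z, hz⟩ := hpsurj a
    have hz0 : z ≠ 0 := by
      rintro rfl
      rw [zero_pow hd0] at hz
      exact ha0 hz.symm
    have hzv : projLift P Q (z • η.rep) = projLift P Q ξ.rep := by
      rw [projLift_smul hP hQ, hz, ha]
    have hrep : z • η.rep = ξ.rep := hGinj _ _ hzv
    have := (Projectivization.mk_eq_mk_iff' K ξ.rep η.rep
      ξ.rep_nonzero η.rep_nonzero).mpr ⟨z, hrep⟩
    rwa [Projectivization.mk_rep, Projectivization.mk_rep] at this
  · -- surjectivity
    intro η
    set u := η.rep with hudef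
    set X := (f2 * u 0 - e2 * u 1) / (e1 * f2 - e2 * f1) with hX
    set Y := (e1 * u 1 - f1 * u 0) / (e1 * f2 - e2 * f1) with hY
    obtain ⟨x, hx⟩ := hpsurj X
    obtain ⟨y, hy⟩ := hpsurj Y
    set v := s x y with hvdef
    have hPv : eval v P = u 0 := by
      rw [hpf v, hvdef, hs1, hs2, hx, hy, hX, hY]
      field_simp
      ring
    have hQv : eval v Q = u 1 := by
      rw [hqf v, hvdef, hs1, hs2, hx, hy, hX, hY]
      field_simp
      linear_combination (u 1) * mul_inv_cancel₀ (show -(f1 * e2) + f2 * e1 ≠ 0 by intro h; apply hdetM; linear_combination h)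
    have hlift : projLift P Q v = u := by
      funext i
      fin_cases i
      · exact hPv
      · exact hQv
    have hvne : v ≠ 0 := by
      intro h0
      have hu0 : u 0 = 0 := by rw [← hPv, h0, heval0 hP]
      have hu1 : u 1 = 0 := by rw [← hQv, h0, heval0 hQ]
      apply η.rep_nonzero
      rw [← hudef]
      funext i
      fin_cases i <;> simp [hu0, hu1]
    refine ⟨Projectivization.mk K v hvne, ?_⟩
    rw [projMap_mk hP hQ]
    have h1 : Projectivization.mk K (projLift P Q v) (hPQ v hvne)
        = Projectivization.mk K η.rep η.rep_nonzero :=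
      (Projectivization.mk_eq_mk_iff' K _ _ _ _).mpr ⟨1, by rw [one_smul]; exact hlift.symm⟩
    rw [h1, Projectivization.mk_rep]

end TRPaux

/-- **Totally ramified points.** Let `F : P¹(K) → P¹(K)` be a rational map of degree
`d > 1` over an algebraically closed field. Then exactly one of the following holds:
either `F` is bijective and totally ramified at every point (i.e. `F⁻¹(F(ξ)) = {ξ}` for
all `ξ`), or `F` is not bijective and is totally ramified at no more than two points. -/
theorem totally_ramified_points {K : Type*} [Field K] [IsAlgClosed K]
    (d : ℕ) (hd : 1 < d) (P Q : MvPolynomial (Fin 2) K)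
    (hP : P.IsHomogeneous d) (hQ : Q.IsHomogeneous d)
    (hPQ : ∀ v : Fin 2 → K, v ≠ 0 → projLift P Q v ≠ 0) :
    Xor'
      (Function.Bijective (projMap P Q hPQ) ∧
        ∀ ξ : Projectivization K (Fin 2 → K),
          (projMap P Q hPQ) ⁻¹' {projMap P Q hPQ ξ} = {ξ})
      (¬ Function.Bijective (projMap P Q hPQ) ∧
        {ξ : Projectivization K (Fin 2 → K) |
          (projMap P Q hPQ) ⁻¹' {projMap P Q hPQ ξ} = {ξ}}.encard ≤ 2) := by
  by_cases hbij : Function.Bijective (projMap P Q hPQ)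
  · left
    refine ⟨⟨hbij, fun ξ => Set.ext fun w => ?_⟩, fun hB => hB.1 hbij⟩
    simp [Set.mem_preimage, hbij.injective.eq_iff]
  · right
    refine ⟨⟨hbij, ?_⟩, fun hA => hbij hA.1⟩
    by_contra hcard
    push_neg at hcard
    set S := {ξ : Projectivization K (Fin 2 → K) |
      (projMap P Q hPQ) ⁻¹' {projMap P Q hPQ ξ} = {ξ}} with hSdef
    have h1lt : 1 < S.encard := lt_trans (by norm_num : (1 : ℕ∞) < 2) hcard
    obtain ⟨ξ1, ξ2, hs1, hs2, h12⟩ := Set.one_lt_encard_iff.mp h1lt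
    have hnsub : ¬ (S ⊆ {ξ1, ξ2}) := by
      intro hsub
      exact absurd ((Set.encard_le_encard hsub).trans_eq (Set.encard_pair h12))
        (not_le.mpr hcard)
    obtain ⟨ξ3, hs3, h3⟩ := Set.not_subset.mp hnsub
    have h13 : ξ1 ≠ ξ3 := fun h => h3 (by rw [← h]; exact Set.mem_insert _ _)
    have h23 : ξ2 ≠ ξ3 := fun h => h3 (by rw [← h]; exact Set.mem_insert_of_mem _ rfl)
    exact hbij (TRPaux.bij_of_three hd hP hQ hPQ ξ1 ξ2 ξ3 h12 h13 h23 hs1 hs2 hs3)
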